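/- Let H be an m×m real symmetric matrix and u,v two indices. Then u and v are cospectral with respect to H (i.e., (Eⱼ)ᵤᵤ = (Eⱼ)ᵥᵥ for all spectral projections Eⱼ of H) if and only if ⟨Hʲ(eᵤ - eᵥ), Hˡ(eᵤ + eᵥ)⟩ = 0 for all j,ℓ ≥ 0. -/
import Mathlib


open Matrix

theorem stmt2 {m r : ℕ} (H : Matrix (Fin m) (Fin m) ℝ)
    (lam : Fin r → ℝ) (E : Fin r → Matrix (Fin m) (Fin m) ℝ)
    (hH : H.IsSymm)
    (hlam : Function.Injective lam)
    (hEsymm : ∀ j, (E j).IsSymm)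
    (hEidem : ∀ j, E j * E j = E j)
    (hEorth : ∀ j k, j ≠ k → E j * E k = 0)
    (hEsum : ∑ j, E j = 1)
    (hEnz : ∀ j, E j ≠ 0)
    (hspec : H = ∑ j, lam j • E j)
    (u v : Fin m) :
    (∀ j, (E j) u u = (E j) v v)
      ↔ ∀ j l : ℕ,
          dotProduct ((H ^ j) *ᵥ ((Pi.single u 1 : Fin m → ℝ) - Pi.single v 1))
            ((H ^ l) *ᵥ ((Pi.single u 1 : Fin m → ℝ) + Pi.single v 1)) = 0 := by
  -- spectral decomposition of powers
  have hpow : ∀ n : ℕ, H ^ n = ∑ k, lam k ^ n • E k := by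
    intro n
    induction n with
    | zero => simp [hEsum]
    | succ n ih =>
      rw [pow_succ, ih, hspec, Finset.sum_mul_sum]
      rw [Finset.sum_congr rfl (fun k _ => Finset.sum_eq_single k
        (fun j _ hj => by rw [smul_mul_smul_comm, hEorth k j (Ne.symm hj), smul_zero])
        (fun h => absurd (Finset.mem_univ k) h))]
      apply Finset.sum_congr rfl
      intro k _
      rw [smul_mul_smul_comm, hEidem, pow_succ]
  -- the dot product equals a weighted sum of diagonal differences
  have key : ∀ j l : ℕ,
      dotProduct ((H ^ j) *ᵥ ((Pi.single u 1 : Fin m → ℝ) - Pi.single v 1))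
        ((H ^ l) *ᵥ ((Pi.single u 1 : Fin m → ℝ) + Pi.single v 1))
      = ∑ k, lam k ^ (j + l) * ((E k) u u - (E k) v v) := by
    intro j l
    have hsymm : (H ^ j)ᵀ = H ^ j := by rw [transpose_pow, hH]
    have h1 : (H ^ j) *ᵥ ((Pi.single u 1 : Fin m → ℝ) - Pi.single v 1)
        = ((Pi.single u 1 : Fin m → ℝ) - Pi.single v 1) ᵥ* (H ^ j) := by
      rw [← hsymm, mulVec_transpose, hsymm]
    rw [h1, ← dotProduct_mulVec, mulVec_mulVec, ← pow_add, hpow (j + l)]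
    set M : Matrix (Fin m) (Fin m) ℝ := ∑ k, lam k ^ (j + l) • E k with hM
    have hdot : ((Pi.single u 1 : Fin m → ℝ) - Pi.single v 1) ⬝ᵥ
        (M *ᵥ ((Pi.single u 1 : Fin m → ℝ) + Pi.single v 1))
        = M u u + M u v - (M v u + M v v) := by
      simp [mulVec_add, mulVec_single, sub_dotProduct, dotProduct_add,
        Pi.single_apply, Finset.sum_ite_eq', mul_comm]
      ring
    have hMapp : ∀ a b, M a b = ∑ k, lam k ^ (j + l) * (E k) a b := by
      intro a b
      rw [hM]
      simp [Matrix.sum_apply]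
    have hMsymm : M u v = M v u := by
      rw [hMapp, hMapp]
      exact Finset.sum_congr rfl fun k _ => by rw [(hEsymm k).apply]
    rw [hdot, hMsymm]
    simp only [hMapp]
    have habc : ∀ (a b c : ℝ), a + b - (b + c) = a - c := fun a b c => by ring
    rw [habc, ← Finset.sum_sub_distrib]
    exact Finset.sum_congr rfl fun k _ => by ring
  constructor
  · intro h j l
    rw [key]
    apply Finset.sum_eq_zero
    intro k _
    rw [h k, sub_self, mul_zero]
  · intro h k
    have h0 : ∀ i : Fin r,
        ∑ k, ((E k) u u - (E k) v v) * lam k ^ (i : ℕ) = 0 := by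
      intro i
      have := h 0 (i : ℕ)
      rw [key] at this
      simpa [mul_comm] using this
    have := Matrix.eq_zero_of_forall_pow_sum_mul_pow_eq_zero hlam h0
    have hk := congrFun this k
    simpa [sub_eq_zero] using hk
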